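/- Let g¹ denote the real vector space of bilinear forms A : V × V → ℝ that are semi-basic in the second argument and satisfy A(JX, Y) = A(JY, X) and A(hX, Y) = A(hY, X) for all X, Y ∈ V. Then g¹ is a linear subspace of the space of bilinear forms on V and its dimension over ℝ equals (n+1)². (This is the computation of the dimension of the kernel g¹(P) of the symbol σ¹(P) of the operator P = (d_J, d_h).) -/

import Mathlib

open Module

/-- Model of the tangent space of `J¹π` at a point: `V = ℝ^{n+1} × ℝ^n`, the first
factor spanned by the horizontal vectors `e_0, …, e_n` (`e_0` the time direction),
the second by the vertical vectors `f_1, …, f_n` (here `f_k = fbase ⟨k-1,_⟩`). -/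
abbrev Vv (n : ℕ) : Type := (Fin (n + 1) → ℝ) × (Fin n → ℝ)

/-- A vector of `V` is vertical if it lies in the span of `f_1, …, f_n`,
i.e. its first component vanishes. -/
def IsVert {n : ℕ} (v : Vv n) : Prop := v.1 = 0

/-- The vertical endomorphism `J : V → V`: `J e_0 = 0`, `J e_i = f_i` (1 ≤ i ≤ n),
`J f_i = 0`. -/
noncomputable def Jv (n : ℕ) : Vv n →ₗ[ℝ] Vv n :=
  LinearMap.prod 0
    ((LinearMap.funLeft ℝ ℝ Fin.succ).comp (LinearMap.fst ℝ (Fin (n + 1) → ℝ) (Fin n → ℝ)))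

/-- The horizontal projector `h : V → V`: `h e_α = e_α` (0 ≤ α ≤ n), `h f_i = 0`. -/
noncomputable def Hv (n : ℕ) : Vv n →ₗ[ℝ] Vv n :=
  LinearMap.prod (LinearMap.fst ℝ (Fin (n + 1) → ℝ) (Fin n → ℝ)) 0

/-- `g¹(P)`: the space of bilinear forms `A` on `V` that are semi-basic in the second
argument and satisfy `A(JX,Y) = A(JY,X)` and `A(hX,Y) = A(hY,X)`. -/
noncomputable def g1 (n : ℕ) : Submodule ℝ (Vv n →ₗ[ℝ] Vv n →ₗ[ℝ] ℝ) where
  carrier := { A | (∀ X v, IsVert v → A X v = 0) ∧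
    (∀ X Y, A (Jv n X) Y = A (Jv n Y) X) ∧
    (∀ X Y, A (Hv n X) Y = A (Hv n Y) X) }
  add_mem' := by
    rintro A B ⟨a1, a2, a3⟩ ⟨b1, b2, b3⟩
    refine ⟨fun X v hv => ?_, fun X Y => ?_, fun X Y => ?_⟩
    · simp [a1 X v hv, b1 X v hv]
    · simp only [LinearMap.add_apply]; rw [a2, b2]
    · simp only [LinearMap.add_apply]; rw [a3, b3]
  zero_mem' := by
    refine ⟨fun X v hv => ?_, fun X Y => ?_, fun X Y => ?_⟩ <;> simp
  smul_mem' := by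
    rintro c A ⟨a1, a2, a3⟩
    refine ⟨fun X v hv => ?_, fun X Y => ?_, fun X Y => ?_⟩
    · simp [a1 X v hv]
    · simp only [LinearMap.smul_apply, smul_eq_mul]; rw [a2]
    · simp only [LinearMap.smul_apply, smul_eq_mul]; rw [a3]

namespace G1Aux

variable (n : ℕ)

noncomputable def eb (α : Fin (n + 1)) : Vv n := (Pi.single α 1, 0)

noncomputable def fb (i : Fin n) : Vv n := (0, Pi.single i 1)

noncomputable def cons0 : (Fin n → ℝ) →ₗ[ℝ] (Fin (n + 1) → ℝ) where
  toFun u := Fin.cons 0 u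
  map_add' u v := by
    funext j
    refine Fin.cases ?_ (fun k => ?_) j <;> simp
  map_smul' c u := by
    funext j
    refine Fin.cases ?_ (fun k => ?_) j <;> simp

lemma cons0_apply (u : Fin n → ℝ) : cons0 n u = Fin.cons 0 u := rfl

lemma cons0_single (i : Fin n) :
    (Fin.cons 0 (Pi.single i 1) : Fin (n + 1) → ℝ) = Pi.single i.succ 1 := by
  funext j
  refine Fin.cases ?_ (fun k => ?_) j
  · simp [Pi.single_apply, (Fin.succ_ne_zero i).symm]
  · simp [Pi.single_apply, Fin.succ_inj]

lemma cons0_zero : (Fin.cons 0 (0 : Fin n → ℝ) : Fin (n + 1) → ℝ) = 0 := by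
  funext j
  refine Fin.cases ?_ (fun k => ?_) j <;> simp

/-- bilinear form attached to a matrix -/
noncomputable def toB (S : Matrix (Fin (n + 1)) (Fin (n + 1)) ℝ) :
    (Fin (n + 1) → ℝ) →ₗ[ℝ] (Fin (n + 1) → ℝ) →ₗ[ℝ] ℝ :=
  LinearMap.mk₂ ℝ (fun x y => ∑ i, ∑ j, x i * S i j * y j)
    (fun x x' y => by
      rw [← Finset.sum_add_distrib]
      refine Finset.sum_congr rfl fun i _ => ?_
      rw [← Finset.sum_add_distrib]
      refine Finset.sum_congr rfl fun j _ => ?_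
      simp only [Pi.add_apply]; ring)
    (fun c x y => by
      simp only [smul_eq_mul, Pi.smul_apply, Finset.mul_sum]
      refine Finset.sum_congr rfl fun i _ => Finset.sum_congr rfl fun j _ => by ring)
    (fun x y y' => by
      rw [← Finset.sum_add_distrib]
      refine Finset.sum_congr rfl fun i _ => ?_
      rw [← Finset.sum_add_distrib]
      refine Finset.sum_congr rfl fun j _ => ?_
      simp only [Pi.add_apply]; ring)
    (fun c x y => by
      simp only [smul_eq_mul, Pi.smul_apply, Finset.mul_sum]
      refine Finset.sum_congr rfl fun i _ => Finset.sum_congr rfl fun j _ => by ring)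

lemma toB_apply (S : Matrix (Fin (n + 1)) (Fin (n + 1)) ℝ) (x y : Fin (n + 1) → ℝ) :
    toB n S x y = ∑ i, ∑ j, x i * S i j * y j := rfl

lemma toB_single (S : Matrix (Fin (n + 1)) (Fin (n + 1)) ℝ) (α β : Fin (n + 1)) :
    toB n S (Pi.single α 1) (Pi.single β 1) = S α β := by
  rw [toB_apply]
  simp [Pi.single_apply, ite_mul, mul_ite, Finset.sum_ite_eq]

lemma toB_zero_left (S : Matrix (Fin (n + 1)) (Fin (n + 1)) ℝ) (y : Fin (n + 1) → ℝ) :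
    toB n S (0 : Fin (n + 1) → ℝ) y = 0 := by
  rw [toB_apply]; simp

lemma toB_zero_right (S : Matrix (Fin (n + 1)) (Fin (n + 1)) ℝ) (x : Fin (n + 1) → ℝ) :
    toB n S x (0 : Fin (n + 1) → ℝ) = 0 := by
  rw [toB_apply]; simp

lemma toB_add (S T : Matrix (Fin (n + 1)) (Fin (n + 1)) ℝ) (x y : Fin (n + 1) → ℝ) :
    toB n (S + T) x y = toB n S x y + toB n T x y := by
  rw [toB_apply, toB_apply, toB_apply, ← Finset.sum_add_distrib]
  refine Finset.sum_congr rfl fun i _ => ?_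
  rw [← Finset.sum_add_distrib]
  refine Finset.sum_congr rfl fun j _ => ?_
  simp only [Matrix.add_apply]; ring

lemma toB_smul (c : ℝ) (S : Matrix (Fin (n + 1)) (Fin (n + 1)) ℝ) (x y : Fin (n + 1) → ℝ) :
    toB n (c • S) x y = c * toB n S x y := by
  rw [toB_apply, toB_apply, Finset.mul_sum]
  refine Finset.sum_congr rfl fun i _ => ?_
  rw [Finset.mul_sum]
  refine Finset.sum_congr rfl fun j _ => ?_
  simp only [Matrix.smul_apply, smul_eq_mul]; ring

def pred1 (α : Fin (n + 1)) : Fin (n + 1) := ⟨α.val - 1, by omega⟩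

noncomputable def Bm (M : Matrix (Fin (n + 1)) (Fin (n + 1)) ℝ) :
    Matrix (Fin (n + 1)) (Fin (n + 1)) ℝ :=
  fun α β => if α.val ≤ β.val then M α β else M β α

noncomputable def Dm (M : Matrix (Fin (n + 1)) (Fin (n + 1)) ℝ) :
    Matrix (Fin (n + 1)) (Fin (n + 1)) ℝ :=
  fun α β => if α.val = 0 ∨ β.val = 0 then 0
    else if α.val ≤ β.val then M β (pred1 n α) else M α (pred1 n β)

lemma Bm_symm (M : Matrix (Fin (n + 1)) (Fin (n + 1)) ℝ) (α β : Fin (n + 1)) :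
    Bm n M α β = Bm n M β α := by
  unfold Bm
  rcases lt_trichotomy α.val β.val with h | h | h
  · simp [h.le, not_le.mpr h]
  · have : α = β := Fin.ext h
    subst this; simp
  · simp [h.le, not_le.mpr h]

lemma Dm_symm (M : Matrix (Fin (n + 1)) (Fin (n + 1)) ℝ) (α β : Fin (n + 1)) :
    Dm n M α β = Dm n M β α := by
  unfold Dm
  rcases eq_or_ne α.val 0 with h0 | h0
  · rcases eq_or_ne β.val 0 with h1 | h1 <;> simp [h0, h1]
  rcases eq_or_ne β.val 0 with h1 | h1
  · simp [h0, h1]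
  simp only [h0, h1, or_self, if_false, false_or, or_false]
  rcases lt_trichotomy α.val β.val with h | h | h
  · simp [h.le, not_le.mpr h]
  · have : α = β := Fin.ext h
    subst this; simp
  · simp [h.le, not_le.mpr h]

lemma Dm_zero_row (M : Matrix (Fin (n + 1)) (Fin (n + 1)) ℝ) (β : Fin (n + 1)) :
    Dm n M 0 β = 0 := by simp [Dm]

lemma toB_symm (S : Matrix (Fin (n + 1)) (Fin (n + 1)) ℝ)
    (hS : ∀ α β, S α β = S β α) (x y : Fin (n + 1) → ℝ) :
    toB n S x y = toB n S y x := by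
  rw [toB_apply, toB_apply, Finset.sum_comm]
  refine Finset.sum_congr rfl fun i _ => Finset.sum_congr rfl fun j _ => ?_
  rw [hS j i]; ring

lemma toB_row0 (S : Matrix (Fin (n + 1)) (Fin (n + 1)) ℝ)
    (hS : ∀ β, S 0 β = 0) (x : Fin (n + 1) → ℝ) (y : Fin (n + 1) → ℝ) :
    toB n S (Fin.cons 0 (fun i => x i.succ)) y = toB n S x y := by
  rw [toB_apply, toB_apply]
  conv_lhs => rw [Fin.sum_univ_succ]
  conv_rhs => rw [Fin.sum_univ_succ]
  simp [hS]

noncomputable def AofM (M : Matrix (Fin (n + 1)) (Fin (n + 1)) ℝ) :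
    Vv n →ₗ[ℝ] Vv n →ₗ[ℝ] ℝ :=
  (toB n (Bm n M)).compl₁₂
      (LinearMap.fst ℝ (Fin (n + 1) → ℝ) (Fin n → ℝ))
      (LinearMap.fst ℝ (Fin (n + 1) → ℝ) (Fin n → ℝ))
    + (toB n (Dm n M)).compl₁₂
      ((cons0 n).comp (LinearMap.snd ℝ (Fin (n + 1) → ℝ) (Fin n → ℝ)))
      (LinearMap.fst ℝ (Fin (n + 1) → ℝ) (Fin n → ℝ))

lemma AofM_apply (M : Matrix (Fin (n + 1)) (Fin (n + 1)) ℝ) (X Y : Vv n) :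
    AofM n M X Y = toB n (Bm n M) X.1 Y.1
      + toB n (Dm n M) (Fin.cons 0 X.2) Y.1 := rfl

lemma Jv_fst (X : Vv n) : (Jv n X).1 = 0 := rfl
lemma Jv_snd (X : Vv n) : (Jv n X).2 = fun i => X.1 i.succ := rfl
lemma Hv_eq (X : Vv n) : Hv n X = (X.1, 0) := rfl

lemma AofM_mem (M : Matrix (Fin (n + 1)) (Fin (n + 1)) ℝ) : AofM n M ∈ g1 n := by
  refine ⟨fun X v hv => ?_, fun X Y => ?_, fun X Y => ?_⟩
  · have h1 : v.1 = 0 := hv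
    rw [AofM_apply, h1, toB_zero_right, toB_zero_right, add_zero]
  · rw [AofM_apply, AofM_apply, Jv_fst, Jv_fst, Jv_snd, Jv_snd,
      toB_row0 n _ (Dm_zero_row n M), toB_row0 n _ (Dm_zero_row n M),
      toB_zero_left, toB_zero_left, zero_add, zero_add]
    exact toB_symm n _ (Dm_symm n M) X.1 Y.1
  · rw [AofM_apply, AofM_apply, Hv_eq, Hv_eq]
    simp only [cons0_zero]
    rw [toB_zero_left, toB_zero_left, add_zero, add_zero]
    exact toB_symm n _ (Bm_symm n M) X.1 Y.1

noncomputable def Psi : Matrix (Fin (n + 1)) (Fin (n + 1)) ℝ →ₗ[ℝ] (Vv n →ₗ[ℝ] Vv n →ₗ[ℝ] ℝ) where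
  toFun := AofM n
  map_add' M N := by
    have hB : Bm n (M + N) = Bm n M + Bm n N := by
      funext α β
      simp only [Bm, Matrix.add_apply, Pi.add_apply]
      split <;> rfl
    have hD : Dm n (M + N) = Dm n M + Dm n N := by
      funext α β
      simp only [Dm, Matrix.add_apply, Pi.add_apply]
      split
      · simp
      · split <;> rfl
    refine LinearMap.ext fun X => LinearMap.ext fun Y => ?_
    simp only [AofM_apply, hB, hD, toB_add, LinearMap.add_apply, AofM_apply]
    ring
  map_smul' c M := by
    have hB : Bm n (c • M) = c • Bm n M := by
      funext α β
      simp only [Bm, Matrix.smul_apply, Pi.smul_apply]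
      split <;> rfl
    have hD : Dm n (c • M) = c • Dm n M := by
      funext α β
      simp only [Dm, Matrix.smul_apply, Pi.smul_apply]
      split
      · simp
      · split <;> rfl
    refine LinearMap.ext fun X => LinearMap.ext fun Y => ?_
    simp only [AofM_apply, hB, hD, toB_smul, LinearMap.smul_apply, RingHom.id_apply,
      smul_eq_mul, AofM_apply]
    ring

noncomputable def Phi : (Vv n →ₗ[ℝ] Vv n →ₗ[ℝ] ℝ) →ₗ[ℝ] Matrix (Fin (n + 1)) (Fin (n + 1)) ℝ where
  toFun A := fun α β =>
    if h : β.val < α.val then A (fb n ⟨β.val, by have := α.isLt; omega⟩) (eb n α)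
    else A (eb n α) (eb n β)
  map_add' A B := by
    funext α β
    by_cases h : β.val < α.val
    · simp only [LinearMap.add_apply, Matrix.add_apply]
      erw [Pi.add_apply, Pi.add_apply]; simp only [dif_pos h]
    · simp only [LinearMap.add_apply, Matrix.add_apply]
      erw [Pi.add_apply, Pi.add_apply]; simp only [dif_neg h]
  map_smul' c A := by
    funext α β
    by_cases h : β.val < α.val
    · simp only [LinearMap.smul_apply, Matrix.smul_apply, RingHom.id_apply]
      erw [Pi.smul_apply, Pi.smul_apply]; simp only [dif_pos h]
    · simp only [LinearMap.smul_apply, Matrix.smul_apply, RingHom.id_apply]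
      erw [Pi.smul_apply, Pi.smul_apply]; simp only [dif_neg h]

lemma Phi_apply (A : Vv n →ₗ[ℝ] Vv n →ₗ[ℝ] ℝ) (α β : Fin (n + 1)) :
    Phi n A α β = if h : β.val < α.val
      then A (fb n ⟨β.val, by have := α.isLt; omega⟩) (eb n α)
      else A (eb n α) (eb n β) := rfl

lemma AofM_ee (M : Matrix (Fin (n + 1)) (Fin (n + 1)) ℝ) (α β : Fin (n + 1)) :
    AofM n M (eb n α) (eb n β) = Bm n M α β := by
  rw [AofM_apply]
  simp only [eb]
  rw [cons0_zero n, toB_zero_left, add_zero]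
  exact toB_single n (Bm n M) α β

lemma AofM_fe (M : Matrix (Fin (n + 1)) (Fin (n + 1)) ℝ) (k : Fin n) (β : Fin (n + 1)) :
    AofM n M (fb n k) (eb n β) = Dm n M k.succ β := by
  rw [AofM_apply]
  simp only [fb, eb]
  rw [cons0_single n, toB_zero_left, zero_add]
  exact toB_single n (Dm n M) k.succ β

lemma Phi_AofM (M : Matrix (Fin (n + 1)) (Fin (n + 1)) ℝ) : Phi n (AofM n M) = M := by
  funext α β
  rw [Phi_apply]
  by_cases h : β.val < α.val
  · rw [dif_pos h, AofM_fe]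
    have hval : ((⟨β.val, by have := α.isLt; omega⟩ : Fin n).succ : Fin (n + 1)).val
        = β.val + 1 := rfl
    unfold Dm
    rw [if_neg (by omega), if_pos (by omega)]
    congr 1
    all_goals exact Fin.ext (by simp only [pred1, hval]; try omega)
  · rw [dif_neg h, AofM_ee]
    unfold Bm
    rw [if_pos (by omega)]

lemma Jv_eb_succ (k : Fin n) : Jv n (eb n k.succ) = fb n k := by
  have h2 : (fun i => (Pi.single (k.succ : Fin (n + 1)) (1 : ℝ) : Fin (n + 1) → ℝ) (Fin.succ i))
      = (Pi.single k (1 : ℝ) : Fin n → ℝ) := by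
    funext i
    simp [Pi.single_apply, Fin.succ_inj]
  exact Prod.ext rfl h2

lemma Jv_eb_zero : Jv n (eb n 0) = 0 := by
  have h2 : (fun i => (Pi.single (0 : Fin (n + 1)) (1 : ℝ) : Fin (n + 1) → ℝ) (Fin.succ i))
      = (0 : Fin n → ℝ) := by
    funext i
    simp [Pi.single_apply, Fin.succ_ne_zero i]
  exact Prod.ext rfl h2

lemma Hv_eb (α : Fin (n + 1)) : Hv n (eb n α) = eb n α := rfl

lemma fb_vert (i : Fin n) : IsVert (fb n i) := rfl

lemma Psi_Phi (A : Vv n →ₗ[ℝ] Vv n →ₗ[ℝ] ℝ) (hA : A ∈ g1 n) : AofM n (Phi n A) = A := by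
  obtain ⟨hsb, hJ, hH⟩ := hA
  have hsb' := (AofM_mem n (Phi n A)).1
  set b := (Pi.basisFun ℝ (Fin (n + 1))).prod (Pi.basisFun ℝ (Fin n)) with hb
  have hb_inl : ∀ α, b (Sum.inl α) = eb n α := fun α => by
    refine Prod.ext ?_ ?_
    · rw [hb, Basis.prod_apply_inl_fst]; simp [eb]
    · rw [hb, Basis.prod_apply_inl_snd]; rfl
  have hb_inr : ∀ i, b (Sum.inr i) = fb n i := fun i => by
    refine Prod.ext ?_ ?_
    · rw [hb, Basis.prod_apply_inr_fst]; rfl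
    · rw [hb, Basis.prod_apply_inr_snd]; simp [fb]
  refine b.ext fun i => b.ext fun j => ?_
  cases j with
  | inr l =>
    rw [hb_inr]
    cases i with
    | inl α =>
      rw [hb_inl, hsb' _ _ (fb_vert n l), hsb _ _ (fb_vert n l)]
    | inr k =>
      rw [hb_inr, hsb' _ _ (fb_vert n l), hsb _ _ (fb_vert n l)]
  | inl β =>
    rw [hb_inl]
    cases i with
    | inl α =>
      rw [hb_inl, AofM_ee]
      unfold Bm
      by_cases h : α.val ≤ β.val
      · rw [if_pos h, Phi_apply, dif_neg (by omega)]
      · rw [if_neg h, Phi_apply, dif_neg (by omega)]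
        have := hH (eb n α) (eb n β)
        rw [Hv_eb, Hv_eb] at this
        exact this.symm
    | inr k =>
      rw [hb_inr, AofM_fe]
      unfold Dm
      by_cases hb0 : β.val = 0
      · have hβ : β = 0 := Fin.ext hb0
        subst hβ
        have h00 : ((0 : Fin (n + 1)).val = 0) := rfl
        rw [if_pos (Or.inr h00)]
        have := hJ (eb n k.succ) (eb n 0)
        rw [Jv_eb_succ, Jv_eb_zero] at this
        rw [this]
        simp
      · have hsv : (Fin.succ k : Fin (n + 1)).val = k.val + 1 := rfl
        rw [if_neg (by omega)]
        by_cases hle : (Fin.succ k : Fin (n + 1)).val ≤ β.val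
        · rw [if_pos hle, Phi_apply, dif_pos (by simp only [pred1]; try omega)]
          have hk : ∀ (p : (pred1 n k.succ).val < n),
              (⟨(pred1 n k.succ).val, p⟩ : Fin n) = k := fun p => by
            apply Fin.ext
            simp only [pred1, Fin.val_succ]
            omega
          rw [hk]
        · rw [if_neg hle, Phi_apply, dif_pos (by simp only [pred1]; try omega)]
          have hβlt : β.val - 1 < n := by have := β.isLt; omega
          have hβ : β = (⟨β.val - 1, hβlt⟩ : Fin n).succ := Fin.ext (by simp only [Fin.val_succ]; omega)
          have := hJ (eb n β) (eb n k.succ)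
          rw [hβ, Jv_eb_succ, Jv_eb_succ] at this
          rw [← hβ] at this
          rw [← this]
          have hk : ∀ (p : (pred1 n β).val < n),
              (⟨(pred1 n β).val, p⟩ : Fin n) = (⟨β.val - 1, hβlt⟩ : Fin n) := fun p => by
            apply Fin.ext
            simp only [pred1]
            try omega
          rw [hk]

noncomputable def equivMat : Matrix (Fin (n + 1)) (Fin (n + 1)) ℝ ≃ₗ[ℝ] g1 n :=
  LinearEquiv.ofLinear ((Psi n).codRestrict (g1 n) (fun M => AofM_mem n M))
    ((Phi n).comp (g1 n).subtype)
    (by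
      refine LinearMap.ext fun A => ?_
      refine Subtype.ext ?_
      exact Psi_Phi n A.1 A.2)
    (by
      refine LinearMap.ext fun M => ?_
      exact Phi_AofM n M)

end G1Aux

/-- The kernel `g¹(P)` of the symbol `σ¹(P)` of `P = (d_J, d_h)` is a linear subspace
of the bilinear forms on `V` of dimension `(n+1)²` over `ℝ`. -/
theorem stmt1 (n : ℕ) (hn : 1 ≤ n) : Module.finrank ℝ (g1 n) = (n + 1) ^ 2 := by
  rw [← (G1Aux.equivMat n).finrank_eq, Module.finrank_matrix]
  simp [sq]
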